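/- arXiv:2103.08329 — 3 statements merged into one kernel-verified Lean document; each statement's English description precedes it below -/
import Mathlib

section
/- For every integer p with p > t/π (t a positive even integer), the Fourier coefficient c_p(t) = 2∫₀¹ x^t cos(pπx) dx satisfies |c_p(t)| ≤ 2t/(p²π² − t²). -/
open Real intervalIntegral


lemma deriv_sin_aux (a : ℝ) (ha : a ≠ 0) (x : ℝ) :
    HasDerivAt (fun y => Real.sin (a*y)/a) (Real.cos (a*x)) x := by
  have h := ((Real.hasDerivAt_sin (a*x)).comp x ((hasDerivAt_id x).const_mul a)).div_const a
  refine h.congr_deriv ?_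
  field_simp

lemma deriv_neg_cos_aux (a : ℝ) (ha : a ≠ 0) (x : ℝ) :
    HasDerivAt (fun y => -Real.cos (a*y)/a) (Real.sin (a*x)) x := by
  have h := (((Real.hasDerivAt_cos (a*x)).comp x ((hasDerivAt_id x).const_mul a)).div_const a).neg
  convert h using 1
  · rfl
  · rfl
  · ext y; simp [Function.comp]; ring
  · field_simp

lemma ibp_cos (a : ℝ) (ha : a ≠ 0) (k : ℕ) :
    ∫ x in (0:ℝ)..1, x^(k+1) * Real.cos (a*x)
      = Real.sin a / a - ((k:ℝ)+1)/a * ∫ x in (0:ℝ)..1, x^k * Real.sin (a*x) := by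
  have hu : ∀ x ∈ Set.uIcc (0:ℝ) 1, HasDerivAt (fun y => y^(k+1)) (((k:ℝ)+1)*x^k) x :=
    fun x _ => by simpa using hasDerivAt_pow (k+1) x
  have hv : ∀ x ∈ Set.uIcc (0:ℝ) 1, HasDerivAt (fun y => Real.sin (a*y)/a) (Real.cos (a*x)) x :=
    fun x _ => deriv_sin_aux a ha x
  rw [intervalIntegral.integral_mul_deriv_eq_deriv_mul hu hv
    (Continuous.intervalIntegrable (by continuity) _ _)
    (Continuous.intervalIntegrable (by continuity) _ _)]
  have : ∀ x : ℝ, ((k:ℝ)+1)*x^k * (Real.sin (a*x)/a) = ((k:ℝ)+1)/a * (x^k * Real.sin (a*x)) := by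
    intro x; ring
  simp only [this]
  rw [intervalIntegral.integral_const_mul]
  simp

lemma ibp_sin (a : ℝ) (ha : a ≠ 0) (k : ℕ) :
    ∫ x in (0:ℝ)..1, x^(k+1) * Real.sin (a*x)
      = -Real.cos a / a + ((k:ℝ)+1)/a * ∫ x in (0:ℝ)..1, x^k * Real.cos (a*x) := by
  have hu : ∀ x ∈ Set.uIcc (0:ℝ) 1, HasDerivAt (fun y => y^(k+1)) (((k:ℝ)+1)*x^k) x :=
    fun x _ => by simpa using hasDerivAt_pow (k+1) x
  have hv : ∀ x ∈ Set.uIcc (0:ℝ) 1, HasDerivAt (fun y => -Real.cos (a*y)/a) (Real.sin (a*x)) x :=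
    fun x _ => deriv_neg_cos_aux a ha x
  rw [intervalIntegral.integral_mul_deriv_eq_deriv_mul hu hv
    (Continuous.intervalIntegrable (by continuity) _ _)
    (Continuous.intervalIntegrable (by continuity) _ _)]
  have : ∀ x : ℝ, ((k:ℝ)+1)*x^k * (-Real.cos (a*x)/a) = -(((k:ℝ)+1)/a) * (x^k * Real.cos (a*x)) := by
    intro x; ring
  simp only [this]
  rw [intervalIntegral.integral_const_mul]
  simp

lemma ibp2 (a : ℝ) (ha : a ≠ 0) (m : ℕ) :
    ∫ x in (0:ℝ)..1, x^(m+2) * Real.cos (a*x)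
      = Real.sin a / a + ((m:ℝ)+2) * Real.cos a / a^2
        - ((m:ℝ)+2)*((m:ℝ)+1)/a^2 * ∫ x in (0:ℝ)..1, x^m * Real.cos (a*x) := by
  rw [show m+2 = (m+1)+1 from rfl, ibp_cos a ha (m+1), ibp_sin a ha m]
  push_cast
  field_simp
  ring

lemma int_cos0 (a : ℝ) (ha : a ≠ 0) :
    ∫ x in (0:ℝ)..1, Real.cos (a*x) = Real.sin a / a := by
  rw [intervalIntegral.integral_eq_sub_of_hasDerivAt (fun x _ => deriv_sin_aux a ha x)
    (Continuous.intervalIntegrable (by continuity) _ _)]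
  simp

lemma bound_aux (a : ℝ) (hs : Real.sin a = 0) :
    ∀ k : ℕ, ((2*(k:ℝ)+2) < a) →
    |∫ x in (0:ℝ)..1, x^(2*k+2) * Real.cos (a*x)| ≤ (2*(k:ℝ)+2)/(a^2 - (2*(k:ℝ)+2)^2) := by
  intro k
  induction k with
  | zero =>
    intro hk
    push_cast at hk ⊢
    have ha : a ≠ 0 := by intro h; rw [h] at hk; linarith
    have h0 : ∫ x in (0:ℝ)..1, x^0 * Real.cos (a*x) = 0 := by
      simp only [pow_zero, one_mul]; rw [int_cos0 a ha, hs]; simp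
    have h2 := ibp2 a ha 0
    rw [h0, hs] at h2
    norm_num at h2 ⊢
    have ha2 : (0:ℝ) < a^2 := by positivity
    have hA : (0:ℝ) < a^2 - 4 := by nlinarith
    rw [h2]
    calc |2*Real.cos a/a^2| = |2*Real.cos a|/a^2 := by
          rw [abs_div, abs_of_nonneg (sq_nonneg a)]
      _ ≤ 2/a^2 := by
          gcongr
          calc |2*Real.cos a| = 2*|Real.cos a| := by rw [abs_mul, abs_two]
            _ ≤ 2*1 := by gcongr; exact Real.abs_cos_le_one a
            _ = 2 := mul_one 2
      _ ≤ 2/(a^2-4) := by gcongr; linarith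
  | succ k ih =>
    intro hk
    have hK0 : (0:ℝ) ≤ (k:ℝ) := Nat.cast_nonneg k
    have hk4 : (2*(k:ℝ)+4) < a := by push_cast at hk; linarith
    have hk' : (2*(k:ℝ)+2) < a := by linarith
    have ha : a ≠ 0 := by intro h; rw [h] at hk4; linarith
    have ha2 : (0:ℝ) < a^2 := by positivity
    have hA1 : (0:ℝ) < a^2 - (2*(k:ℝ)+2)^2 := by nlinarith
    have hA2 : (0:ℝ) < a^2 - (2*(k:ℝ)+4)^2 := by nlinarith
    have hIH := ih hk'
    have h3 : ∫ x in (0:ℝ)..1, x^(2*(k+1)+2) * Real.cos (a*x)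
        = (2*(k:ℝ)+4)*Real.cos a/a^2
          - (2*(k:ℝ)+4)*(2*(k:ℝ)+3)/a^2 * ∫ x in (0:ℝ)..1, x^(2*k+2) * Real.cos (a*x) := by
      rw [show 2*(k+1)+2 = (2*k+2)+2 from by ring, ibp2 a ha (2*k+2), hs]
      push_cast
      ring
    push_cast
    rw [show (2*((k:ℝ)+1)+2) = 2*(k:ℝ)+4 from by ring, h3]
    set I := ∫ x in (0:ℝ)..1, x^(2*k+2) * Real.cos (a*x) with hIdef
    have hc2 : (0:ℝ) ≤ (2*(k:ℝ)+4)*(2*(k:ℝ)+3)/a^2 := by positivity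
    calc |(2*(k:ℝ)+4)*Real.cos a/a^2 - (2*(k:ℝ)+4)*(2*(k:ℝ)+3)/a^2 * I|
        ≤ |(2*(k:ℝ)+4)*Real.cos a/a^2| + |(2*(k:ℝ)+4)*(2*(k:ℝ)+3)/a^2 * I| := abs_sub _ _
      _ ≤ (2*(k:ℝ)+4)/a^2
          + (2*(k:ℝ)+4)*(2*(k:ℝ)+3)/a^2 * ((2*(k:ℝ)+2)/(a^2-(2*(k:ℝ)+2)^2)) := by
          apply add_le_add
          · rw [abs_div, abs_of_nonneg (sq_nonneg a), abs_mul,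
              abs_of_nonneg (show (0:ℝ) ≤ 2*(k:ℝ)+4 by linarith)]
            calc (2*(k:ℝ)+4)*|Real.cos a|/a^2 ≤ (2*(k:ℝ)+4)*1/a^2 := by
                  gcongr; exact Real.abs_cos_le_one a
              _ = (2*(k:ℝ)+4)/a^2 := by ring
          · rw [abs_mul, abs_of_nonneg hc2]
            exact mul_le_mul_of_nonneg_left hIH hc2
      _ ≤ (2*(k:ℝ)+4)/(a^2-(2*(k:ℝ)+4)^2) := by
          have e : (2*(k:ℝ)+4)/a^2
              + (2*(k:ℝ)+4)*(2*(k:ℝ)+3)/a^2 * ((2*(k:ℝ)+2)/(a^2-(2*(k:ℝ)+2)^2))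
              = ((2*(k:ℝ)+4)*(a^2+(2*(k:ℝ)+2)))/(a^2*(a^2-(2*(k:ℝ)+2)^2)) := by
            rw [div_mul_div_comm, div_add_div _ _ ha2.ne' (mul_ne_zero ha2.ne' hA1.ne'),
              div_eq_div_iff (mul_ne_zero ha2.ne' (mul_ne_zero ha2.ne' hA1.ne')) (mul_ne_zero ha2.ne' hA1.ne')]
            ring
          rw [e, div_le_div_iff₀ (mul_pos ha2 hA1) hA2]
          nlinarith [mul_nonneg ha2.le hK0, mul_nonneg (mul_nonneg hK0 hK0) hK0,
            mul_nonneg hK0 hK0, mul_nonneg ha2.le (mul_nonneg hK0 hK0),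
            mul_pos ha2 ha2]



theorem fourier_cos_coeff_tail_bound (t : ℕ) (ht : 0 < t) (hteven : Even t)
    (p : ℕ) (hp : (t : ℝ) / Real.pi < p) :
    |2 * ∫ x in (0 : ℝ)..1, x ^ t * Real.cos (p * Real.pi * x)| ≤
      2 * t / ((p : ℝ) ^ 2 * Real.pi ^ 2 - (t : ℝ) ^ 2) := by
  obtain ⟨m, hm⟩ := hteven
  have htk : t = 2*(m-1)+2 := by omega
  have hlt' : (t:ℝ) < (p:ℝ) * Real.pi := by
    have := (div_lt_iff₀ Real.pi_pos).mp hp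
    linarith [this]
  rw [htk] at hlt' ⊢
  push_cast at hlt' ⊢
  have hb := bound_aux ((p:ℝ)*Real.pi) (Real.sin_nat_mul_pi p) (m-1) hlt'
  rw [abs_mul, abs_two]
  calc 2 * |∫ x in (0:ℝ)..1, x ^ (2*(m-1)+2) * Real.cos ((p:ℝ)*Real.pi*x)|
      ≤ 2 * ((2*((m-1:ℕ):ℝ)+2)/(((p:ℝ)*Real.pi)^2 - (2*((m-1:ℕ):ℝ)+2)^2)) := by linarith
    _ = 2 * (2*((m-1:ℕ):ℝ)+2) / ((p:ℝ)^2*Real.pi^2 - (2*((m-1:ℕ):ℝ)+2)^2) := by ring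
end

section
/- For 0 < ε < 2/π and a positive integer t, if N ≥ t/(π·tanh(πε/2)) then (1/π)·log((Nπ + t)/(Nπ − t)) ≤ ε; moreover t/(π·tanh(πε/2)) ≥ 2t/(π²ε). -/
open Real

lemma sinh_le_mul_cosh_aux {x : ℝ} (hx : 0 ≤ x) : Real.sinh x ≤ x * Real.cosh x := by
  have hderiv : ∀ y : ℝ, HasDerivAt (fun y => y * Real.cosh y - Real.sinh y)
      (y * Real.sinh y) y := by
    intro y
    have h1 : HasDerivAt (fun y : ℝ => y * Real.cosh y - Real.sinh y)
        (1 * Real.cosh y + y * Real.sinh y - Real.cosh y) y :=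
      ((hasDerivAt_id y).mul (Real.hasDerivAt_cosh y)).sub (Real.hasDerivAt_sinh y)
    convert h1 using 1
    ring
  have hmono : MonotoneOn (fun y => y * Real.cosh y - Real.sinh y) (Set.Ici 0) := by
    apply monotoneOn_of_deriv_nonneg (convex_Ici 0)
    · exact (Continuous.sub (continuous_id.mul Real.continuous_cosh)
        Real.continuous_sinh).continuousOn
    · intro y _
      exact (hderiv y).differentiableAt.differentiableWithinAt
    · intro y hy
      rw [interior_Ici] at hy
      rw [(hderiv y).deriv]
      exact mul_nonneg hy.le (Real.sinh_pos_iff.2 hy).le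
  have h0 := hmono (Set.self_mem_Ici) hx hx
  simpa using h0

lemma tanh_le_self_aux {x : ℝ} (hx : 0 ≤ x) : Real.tanh x ≤ x := by
  rw [Real.tanh_eq_sinh_div_cosh, div_le_iff₀ (Real.cosh_pos x)]
  exact sinh_le_mul_cosh_aux hx

theorem log_bound_from_tanh (ε : ℝ) (hε : 0 < ε) (hε' : ε < 2 / Real.pi)
    (t : ℕ) (ht : 0 < t) (N : ℝ)
    (hN : (t : ℝ) / (Real.pi * Real.tanh (Real.pi * ε / 2)) ≤ N) :
    (1 / Real.pi) * Real.log ((N * Real.pi + t) / (N * Real.pi - t)) ≤ ε ∧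
    2 * (t : ℝ) / (Real.pi ^ 2 * ε) ≤ (t : ℝ) / (Real.pi * Real.tanh (Real.pi * ε / 2)) := by
  have hpi := Real.pi_pos
  set c : ℝ := Real.pi * ε / 2 with hc_def
  have hc : 0 < c := by positivity
  set T : ℝ := Real.tanh c with hT_def
  have hT0 : 0 < T := by
    rw [hT_def, Real.tanh_eq_sinh_div_cosh]
    exact div_pos (Real.sinh_pos_iff.2 hc) (Real.cosh_pos c)
  have hT1 : T < 1 := by
    rw [hT_def, Real.tanh_eq_sinh_div_cosh, div_lt_one (Real.cosh_pos c)]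
    nlinarith [Real.cosh_sub_sinh c, Real.exp_pos (-c)]
  have ht' : (0 : ℝ) < t := Nat.cast_pos.2 ht
  have hπT : 0 < Real.pi * T := by positivity
  -- N is positive and t ≤ N * π * T
  have hN0 : 0 < N := lt_of_lt_of_le (by positivity) hN
  have htNT : (t : ℝ) ≤ N * Real.pi * T := by
    rw [div_le_iff₀ hπT] at hN
    nlinarith
  have hNt : (t : ℝ) < N * Real.pi := by nlinarith
  -- key identity : (1+T)/(1-T) = exp (2c)
  have hE : Real.exp (2 * c) * (1 - T) = 1 + T := by
    have h1 : Real.cosh c + Real.sinh c = Real.exp c := Real.cosh_add_sinh c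
    have h2 : Real.cosh c - Real.sinh c = Real.exp (-c) := Real.cosh_sub_sinh c
    have h3 : Real.exp (2 * c) * Real.exp (-c) = Real.exp c := by
      rw [← Real.exp_add]; ring_nf
    have hcosh := Real.cosh_pos c
    rw [hT_def, Real.tanh_eq_sinh_div_cosh]
    field_simp
    have h4 : Real.exp (2 * c) * (Real.cosh c - Real.sinh c) = Real.exp (2 * c) * Real.exp (-c) := by rw [h2]
    nlinarith [h4]
  constructor
  · -- first part
    have hden : 0 < N * Real.pi - t := by linarith
    have hratio : (N * Real.pi + t) / (N * Real.pi - t) ≤ Real.exp (2 * c) := by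
      rw [div_le_iff₀ hden]
      nlinarith [Real.exp_pos (2 * c)]
    have hpos : 0 < (N * Real.pi + t) / (N * Real.pi - t) := by positivity
    have hlog : Real.log ((N * Real.pi + t) / (N * Real.pi - t)) ≤ 2 * c := by
      calc Real.log ((N * Real.pi + t) / (N * Real.pi - t))
          ≤ Real.log (Real.exp (2 * c)) := Real.log_le_log hpos hratio
        _ = 2 * c := Real.log_exp _
    have hfin : Real.log ((N * Real.pi + t) / (N * Real.pi - t)) ≤ Real.pi * ε := by
      calc Real.log ((N * Real.pi + t) / (N * Real.pi - t)) ≤ 2 * c := hlog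
        _ = Real.pi * ε := by rw [hc_def]; ring
    have h2 : (1 / Real.pi) * (Real.pi * ε) = ε := by field_simp
    calc (1 / Real.pi) * Real.log ((N * Real.pi + t) / (N * Real.pi - t))
        ≤ (1 / Real.pi) * (Real.pi * ε) := by
          apply mul_le_mul_of_nonneg_left hfin; positivity
      _ = ε := h2
  · -- second part
    have hTc : T ≤ c := tanh_le_self_aux hc.le
    have h1 : (t : ℝ) / (Real.pi * c) ≤ (t : ℝ) / (Real.pi * T) := by
      apply div_le_div_of_nonneg_left ht'.le hπT
      nlinarith
    calc 2 * (t : ℝ) / (Real.pi ^ 2 * ε) = (t : ℝ) / (Real.pi * c) := by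
          rw [hc_def]; field_simp
      _ ≤ (t : ℝ) / (Real.pi * T) := h1
end

section
/- For every nonnegative even integer t and every integer p ≥ 1, the Fourier coefficient c_p(t) = 2∫₀¹ x^t cos(pπx) dx satisfies (−1)^p·c_p(t) ≥ 0. -/
open Real intervalIntegral

private lemma cos_step (n : ℕ) (a : ℝ) (ha : a ≠ 0) :
    ∫ x in (0:ℝ)..1, x ^ (n+1) * Real.cos (a*x)
      = Real.sin a / a - ((n+1 : ℝ)/a) * ∫ x in (0:ℝ)..1, x ^ n * Real.sin (a*x) := by
  have hu : ∀ x ∈ Set.uIcc (0:ℝ) 1, HasDerivAt (fun y : ℝ => y ^ (n+1))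
      (((n:ℝ)+1) * x ^ n) x := by
    intro x _
    simpa using (hasDerivAt_pow (n+1) x)
  have hv : ∀ x ∈ Set.uIcc (0:ℝ) 1, HasDerivAt (fun y : ℝ => Real.sin (a*y) / a)
      (Real.cos (a*x)) x := by
    intro x _
    have h1 : HasDerivAt (fun y : ℝ => Real.sin (a*y)) (Real.cos (a*x) * a) x := by
      simpa [Function.comp_def] using (Real.hasDerivAt_sin (a*x)).comp x ((hasDerivAt_id x).const_mul a)
    have := h1.div_const a
    simpa [mul_div_assoc, mul_div_cancel_right₀ _ ha] using this
  have hInt1 : IntervalIntegrable (fun x : ℝ => ((n:ℝ)+1) * x ^ n) MeasureTheory.volume 0 1 :=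
    (continuous_const.mul (continuous_pow n)).intervalIntegrable 0 1
  have hInt2 : IntervalIntegrable (fun x : ℝ => Real.cos (a*x)) MeasureTheory.volume 0 1 :=
    (Real.continuous_cos.comp (continuous_const.mul continuous_id)).intervalIntegrable 0 1
  have key := intervalIntegral.integral_mul_deriv_eq_deriv_mul hu hv hInt1 hInt2
  rw [key]
  have : (∫ x in (0:ℝ)..1, ((n:ℝ)+1) * x ^ n * (Real.sin (a*x) / a))
      = ((n+1 : ℝ)/a) * ∫ x in (0:ℝ)..1, x ^ n * Real.sin (a*x) := by
    rw [← intervalIntegral.integral_const_mul]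
    apply intervalIntegral.integral_congr
    intro x _
    ring
  rw [this]
  simp

private lemma sin_step (n : ℕ) (a : ℝ) (ha : a ≠ 0) :
    ∫ x in (0:ℝ)..1, x ^ (n+1) * Real.sin (a*x)
      = -Real.cos a / a + ((n+1 : ℝ)/a) * ∫ x in (0:ℝ)..1, x ^ n * Real.cos (a*x) := by
  have hu : ∀ x ∈ Set.uIcc (0:ℝ) 1, HasDerivAt (fun y : ℝ => y ^ (n+1))
      (((n:ℝ)+1) * x ^ n) x := by
    intro x _
    simpa using (hasDerivAt_pow (n+1) x)
  have hv : ∀ x ∈ Set.uIcc (0:ℝ) 1, HasDerivAt (fun y : ℝ => -Real.cos (a*y) / a)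
      (Real.sin (a*x)) x := by
    intro x _
    have h1 : HasDerivAt (fun y : ℝ => Real.cos (a*y)) (-Real.sin (a*x) * a) x := by
      simpa [Function.comp_def] using (Real.hasDerivAt_cos (a*x)).comp x ((hasDerivAt_id x).const_mul a)
    have := (h1.neg).div_const a
    simpa [neg_mul, neg_neg, mul_div_assoc, mul_div_cancel_right₀ _ ha] using this
  have hInt1 : IntervalIntegrable (fun x : ℝ => ((n:ℝ)+1) * x ^ n) MeasureTheory.volume 0 1 :=
    (continuous_const.mul (continuous_pow n)).intervalIntegrable 0 1
  have hInt2 : IntervalIntegrable (fun x : ℝ => Real.sin (a*x)) MeasureTheory.volume 0 1 :=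
    (Real.continuous_sin.comp (continuous_const.mul continuous_id)).intervalIntegrable 0 1
  have key := intervalIntegral.integral_mul_deriv_eq_deriv_mul hu hv hInt1 hInt2
  rw [key]
  have : (∫ x in (0:ℝ)..1, ((n:ℝ)+1) * x ^ n * (-Real.cos (a*x) / a))
      = -(((n+1 : ℝ)/a) * ∫ x in (0:ℝ)..1, x ^ n * Real.cos (a*x)) := by
    rw [← intervalIntegral.integral_const_mul, ← intervalIntegral.integral_neg]
    apply intervalIntegral.integral_congr
    intro x _
    ring
  rw [this]
  simp

private lemma cos_bound (n : ℕ) (a : ℝ) :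
    |∫ x in (0:ℝ)..1, x ^ n * Real.cos (a*x)| ≤ 1 / (n+1 : ℝ) := by
  have h01 : (0:ℝ) ≤ 1 := by norm_num
  have habs := intervalIntegral.abs_integral_le_integral_abs (μ := MeasureTheory.volume) (f := fun x : ℝ => x ^ n * Real.cos (a*x)) h01
  refine habs.trans ?_
  have hmono : (∫ x in (0:ℝ)..1, |x ^ n * Real.cos (a*x)|) ≤ ∫ x in (0:ℝ)..1, x ^ n := by
    apply intervalIntegral.integral_mono_on h01
    · exact ((continuous_pow n).mul
        (Real.continuous_cos.comp (continuous_const.mul continuous_id))).abs.intervalIntegrable 0 1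
    · exact (continuous_pow n).intervalIntegrable 0 1
    · intro x hx
      have hx0 : 0 ≤ x := hx.1
      calc |x ^ n * Real.cos (a*x)| = |x ^ n| * |Real.cos (a*x)| := abs_mul _ _
        _ ≤ |x ^ n| * 1 := by
            exact mul_le_mul_of_nonneg_left (Real.abs_cos_le_one _) (abs_nonneg _)
        _ = x ^ n := by rw [mul_one, abs_of_nonneg (pow_nonneg hx0 n)]
  refine hmono.trans ?_
  rw [integral_pow]
  rw [one_pow, zero_pow (by positivity)]
  norm_num

theorem fourier_cos_coeff_sign (t : ℕ) (hteven : Even t) (p : ℕ) (hp : 1 ≤ p) :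
    0 ≤ (-1 : ℝ) ^ p * (2 * ∫ x in (0 : ℝ)..1, x ^ t * Real.cos (p * Real.pi * x)) := by
  set a : ℝ := p * Real.pi with ha_def
  have hp0 : (0:ℝ) < p := by exact_mod_cast hp
  have ha : a ≠ 0 := by positivity
  have hsina : Real.sin a = 0 := Real.sin_nat_mul_pi p
  have hcosa : Real.cos a = (-1:ℝ) ^ p := by
    rw [ha_def]
    simpa using Real.cos_nat_mul_pi_sub 0 p
  rcases t with _ | _ | m
  · -- t = 0
    have h0 : (∫ x in (0:ℝ)..1, x ^ 0 * Real.cos (a*x)) = 0 := by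
      have hder : ∀ x ∈ Set.uIcc (0:ℝ) 1, HasDerivAt (fun y : ℝ => Real.sin (a*y) / a)
          (x ^ 0 * Real.cos (a*x)) x := by
        intro x _
        have h1 : HasDerivAt (fun y : ℝ => Real.sin (a*y)) (Real.cos (a*x) * a) x := by
          simpa [Function.comp_def] using (Real.hasDerivAt_sin (a*x)).comp x ((hasDerivAt_id x).const_mul a)
        have := h1.div_const a
        simpa [mul_div_assoc, mul_div_cancel_right₀ _ ha] using this
      have hInt : IntervalIntegrable (fun x : ℝ => x ^ 0 * Real.cos (a*x))
          MeasureTheory.volume 0 1 :=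
        ((continuous_pow 0).mul
          (Real.continuous_cos.comp (continuous_const.mul continuous_id))).intervalIntegrable 0 1
      rw [intervalIntegral.integral_eq_sub_of_hasDerivAt hder hInt]
      simp [hsina]
    rw [h0]
    simp
  · exact absurd hteven (by decide)
  · -- t = m + 2
    have hK := cos_bound m a
    have h1 := cos_step (m+1) a ha
    have h2 := sin_step m a ha
    set K := ∫ x in (0:ℝ)..1, x ^ m * Real.cos (a*x) with hK_def
    have hJ : (∫ x in (0:ℝ)..1, x ^ (m+2) * Real.cos (a*x))
        = (-1:ℝ)^p * (m+2) / a^2 - ((m+2:ℝ)*(m+1)/a^2) * K := by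
      rw [h1, h2, hsina, hcosa]
      field_simp
      push_cast
      ring
    rw [hJ]
    have heps : ((-1:ℝ)^p) * ((-1:ℝ)^p) = 1 := by
      rw [← pow_add]; exact (neg_one_pow_eq_one_iff_even (by norm_num)).mpr (Even.add_self p)
    have hεK : (-1:ℝ)^p * K ≤ 1/(m+1 : ℝ) := by
      calc (-1:ℝ)^p * K ≤ |(-1:ℝ)^p * K| := le_abs_self _
        _ = |K| := by rw [abs_mul]; simp
        _ ≤ 1/(m+1:ℝ) := hK
    have ha2 : (0:ℝ) < a^2 := by positivity
    have hm1 : (0:ℝ) < (m:ℝ)+1 := by positivity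
    have expand : (-1:ℝ)^p * (2 * ((-1:ℝ)^p * (m+2) / a^2 - ((m+2:ℝ)*(m+1)/a^2) * K))
        = 2*((m:ℝ)+2)/a^2 * (1 - ((m:ℝ)+1) * ((-1:ℝ)^p * K)) := by
      field_simp
      nlinarith [heps]
    rw [expand]
    apply mul_nonneg
    · positivity
    · have : ((m:ℝ)+1) * ((-1:ℝ)^p * K) ≤ ((m:ℝ)+1) * (1/(m+1:ℝ)) :=
        mul_le_mul_of_nonneg_left hεK (by positivity)
      rw [mul_one_div, div_self (ne_of_gt hm1)] at this
      linarith
end
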